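/- Let λ/μ be a skew partition of n with i minimal such that λ_i > μ_i, and suppose λ_{i+1} > μ_{i+1}. Let m ∈ ℤ, let t be a standard skew tableau of shape λ/μ with target [m, m+n−1], and suppose col_t(m+1) = col_t(m) + 1. Then t is the m-critical tableau of shape λ/μ if and only if (1) either col_t(m) = col_t(m+2) or m+1 ∉ SD(t), and (2) every descent j of t with j > m+1 is a weak descent of t. -/

import Mathlib

/-- Partial sum `λ₁ + ⋯ + λ_k` of a 1-indexed sequence of parts. -/
def psum (lam : ℕ → ℕ) (k : ℕ) : ℕ := ∑ i ∈ Finset.Icc 1 k, lam i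

/-- `lam` is a composition of `n` (1-indexed parts, extended by zeros). -/
def IsComp (n : ℕ) (lam : ℕ → ℕ) : Prop :=
  lam 0 = 0 ∧ ∃ N, (∀ i, N < i → lam i = 0) ∧ psum lam N = n

/-- `lam` is a partition of `n` (weakly decreasing parts). -/
def IsPartition (n : ℕ) (lam : ℕ → ℕ) : Prop :=
  IsComp n lam ∧ ∀ i j, 1 ≤ i → i ≤ j → lam j ≤ lam i

/-- Dominance order in the paper's (column) convention: `lam` dominates `mu`
(written `mu ≤ lam`) iff every partial sum of `lam` is at most the
corresponding partial sum of `mu`. -/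
def Dominates (lam mu : ℕ → ℕ) : Prop := ∀ k, psum lam k ≤ psum mu k

/-- Row index of the box containing the entry `k`. -/
def rowT (p : ℕ → ℕ × ℕ) (k : ℕ) : ℕ := (p k).1
/-- Column index of the box containing the entry `k`. -/
def colT (p : ℕ → ℕ × ℕ) (k : ℕ) : ℕ := (p k).2

/-- `p` is the position function of a bijective filling of the skew diagram
`[lam] ∖ [mu]` (1-indexed rows and columns, `lam j` boxes in column `j`)
by the entries `a+1, …, a+n`. -/
def IsSkewTab (lam mu : ℕ → ℕ) (a n : ℕ) (p : ℕ → ℕ × ℕ) : Prop :=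
  (∀ k ∈ Finset.Icc (a+1) (a+n),
      1 ≤ (p k).2 ∧ mu (p k).2 < (p k).1 ∧ (p k).1 ≤ lam (p k).2) ∧
  (∀ k ∈ Finset.Icc (a+1) (a+n), ∀ l ∈ Finset.Icc (a+1) (a+n), p k = p l → k = l) ∧
  (∀ c : ℕ × ℕ, 1 ≤ c.2 → mu c.2 < c.1 → c.1 ≤ lam c.2 →
      ∃ k ∈ Finset.Icc (a+1) (a+n), p k = c)

/-- A straight-shape `lam`-tableau with entries `1, …, n`. -/
def IsTab (lam : ℕ → ℕ) (n : ℕ) (p : ℕ → ℕ × ℕ) : Prop :=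
  IsSkewTab lam (fun _ => 0) 0 n p

/-- Entries increase down each column. -/
def ColStd (a n : ℕ) (p : ℕ → ℕ × ℕ) : Prop :=
  ∀ k ∈ Finset.Icc (a+1) (a+n), ∀ l ∈ Finset.Icc (a+1) (a+n),
    colT p k = colT p l → rowT p k < rowT p l → k < l

/-- Entries increase along each row. -/
def RowStd (a n : ℕ) (p : ℕ → ℕ × ℕ) : Prop :=
  ∀ k ∈ Finset.Icc (a+1) (a+n), ∀ l ∈ Finset.Icc (a+1) (a+n),
    rowT p k = rowT p l → colT p k < colT p l → k < l

/-- Standard skew tableau of shape `lam/mu` with entries `a+1, …, a+n`. -/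
def IsStdSkew (lam mu : ℕ → ℕ) (a n : ℕ) (p : ℕ → ℕ × ℕ) : Prop :=
  IsSkewTab lam mu a n p ∧ ColStd a n p ∧ RowStd a n p

/-- Standard `lam`-tableau with entries `1, …, n`. -/
def IsStd (lam : ℕ → ℕ) (n : ℕ) (p : ℕ → ℕ × ℕ) : Prop :=
  IsStdSkew lam (fun _ => 0) 0 n p

/-- Column standard straight-shape `lam`-tableau. -/
def IsColStdTab (lam : ℕ → ℕ) (n : ℕ) (p : ℕ → ℕ × ℕ) : Prop :=
  IsTab lam n p ∧ ColStd 0 n p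

/-- `i ∈ D(p)`: a descent, `col(i) ≥ col(i+1)`. -/
def inD (a n : ℕ) (p : ℕ → ℕ × ℕ) (i : ℕ) : Prop :=
  a + 1 ≤ i ∧ i + 1 ≤ a + n ∧ colT p (i+1) ≤ colT p i
/-- `i ∈ SD(p)`: a strong descent, `col(i) > col(i+1)`. -/
def inSD (a n : ℕ) (p : ℕ → ℕ × ℕ) (i : ℕ) : Prop :=
  a + 1 ≤ i ∧ i + 1 ≤ a + n ∧ colT p (i+1) < colT p i
/-- `i ∈ WD(p)`: a weak descent, `col(i) = col(i+1)`. -/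
def inWD (a n : ℕ) (p : ℕ → ℕ × ℕ) (i : ℕ) : Prop :=
  a + 1 ≤ i ∧ i + 1 ≤ a + n ∧ colT p (i+1) = colT p i
/-- `i ∈ A(p)`: an ascent, `col(i) < col(i+1)`. -/
def inA (a n : ℕ) (p : ℕ → ℕ × ℕ) (i : ℕ) : Prop :=
  a + 1 ≤ i ∧ i + 1 ≤ a + n ∧ colT p i < colT p (i+1)
/-- `i ∈ SA(p)`: a strong ascent, `row(i) > row(i+1)`. -/
def inSA (a n : ℕ) (p : ℕ → ℕ × ℕ) (i : ℕ) : Prop :=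
  a + 1 ≤ i ∧ i + 1 ≤ a + n ∧ rowT p (i+1) < rowT p i

/-- Descent set of a tableau with entries `1, …, n`. -/
def Dset (n : ℕ) (p : ℕ → ℕ × ℕ) : Set ℕ := {i | inD 0 n p i}

/-- Shape of the restriction of `p` to entries `≤ m`: the number of boxes
of column `j` occupied by entries `≤ m`. -/
def resShape (p : ℕ → ℕ × ℕ) (m j : ℕ) : ℕ :=
  ((Finset.Icc 1 m).filter (fun k => colT p k = j)).card

/-- Extended dominance order on standard tableaux with `n` boxes: `u ≤ t`. -/
def ExtDomLe (n : ℕ) (pu pt : ℕ → ℕ × ℕ) : Prop :=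
  ∀ m ∈ Finset.Icc 1 n, Dominates (fun j => resShape pt m j) (fun j => resShape pu m j)

/-- `i` is the restriction number of `(u,t)`: the restrictions to entries `≤ i`
agree, and `i` is maximal with this property. -/
def RestNum (n : ℕ) (pu pt : ℕ → ℕ × ℕ) (i : ℕ) : Prop :=
  i ≤ n ∧ (∀ k, 1 ≤ k → k ≤ i → pu k = pt k) ∧ (i = n ∨ pu (i+1) ≠ pt (i+1))

/-- `(u,t)` is favourable with restriction number `i`:
`i` lies in the symmetric difference `D(u) ⊕ D(t)`. -/
def Favourable (n : ℕ) (pu pt : ℕ → ℕ × ℕ) (i : ℕ) : Prop :=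
  RestNum n pu pt i ∧
    ((inD 0 n pu i ∧ ¬ inD 0 n pt i) ∨ (inD 0 n pt i ∧ ¬ inD 0 n pu i))

/-- Dual Knuth move of the first kind of index `k` from `u` to `t`,
on standard tableaux of shape `lam`:  `t = s_k u` with
`D(u) ∩ {k-1,k} = {k-1}` and `D(t) ∩ {k-1,k} = {k}`. -/
def DK1 (lam : ℕ → ℕ) (n : ℕ) (pu pt : ℕ → ℕ × ℕ) (k : ℕ) : Prop :=
  IsStd lam n pu ∧ IsStd lam n pt ∧ 2 ≤ k ∧
  (∀ m, pt m = pu (Equiv.swap k (k+1) m)) ∧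
  inD 0 n pu (k-1) ∧ ¬ inD 0 n pu k ∧ inD 0 n pt k ∧ ¬ inD 0 n pt (k-1)

/-- Dual Knuth move of the second kind of index `k` from `u` to `t`:
`t = s_k u` with `D(u) ∩ {k,k+1} = {k+1}` and `D(t) ∩ {k,k+1} = {k}`. -/
def DK2 (lam : ℕ → ℕ) (n : ℕ) (pu pt : ℕ → ℕ × ℕ) (k : ℕ) : Prop :=
  IsStd lam n pu ∧ IsStd lam n pt ∧ k + 2 ≤ n ∧
  (∀ m, pt m = pu (Equiv.swap k (k+1) m)) ∧
  inD 0 n pu (k+1) ∧ ¬ inD 0 n pu k ∧ inD 0 n pt k ∧ ¬ inD 0 n pt (k+1)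

/-- A dual Knuth move (of either kind) of index `k` from `u` to `t`. -/
def DKMove (lam : ℕ → ℕ) (n : ℕ) (pu pt : ℕ → ℕ × ℕ) (k : ℕ) : Prop :=
  DK1 lam n pu pt k ∨ DK2 lam n pu pt k

/-- A paired dual Knuth move: a dual Knuth move of the same kind and the same
index applied simultaneously to both components of a pair. -/
def PairedDKMove (mu lam : ℕ → ℕ) (n : ℕ)
    (a b : (ℕ → ℕ × ℕ) × (ℕ → ℕ × ℕ)) : Prop :=
  ∃ k, (DK1 mu n a.1 b.1 k ∧ DK1 lam n a.2 b.2 k) ∨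
       (DK2 mu n a.1 b.1 k ∧ DK2 lam n a.2 b.2 k)

/-- Paired dual Knuth equivalence: the equivalence relation generated by
paired dual Knuth moves. -/
def PairedDKEquiv (mu lam : ℕ → ℕ) (n : ℕ)
    (a b : (ℕ → ℕ × ℕ) × (ℕ → ℕ × ℕ)) : Prop :=
  Relation.ReflTransGen
    (fun x y => PairedDKMove mu lam n x y ∨ PairedDKMove mu lam n y x) a b

/-- Lexicographic order on same-shape column standard tableaux: `u <_lex t`. -/
def LexLT (n : ℕ) (pu pt : ℕ → ℕ × ℕ) : Prop :=
  ∃ l, 1 ≤ l ∧ l ≤ n ∧ colT pt l < colT pu l ∧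
    ∀ m, l < m → m ≤ n → colT pt m = colT pu m

/-- `w` is a permutation of `[1,n]`, fixing all other natural numbers. -/
def IsPermOf (n : ℕ) (w : ℕ → ℕ) : Prop :=
  (∀ k ∈ Finset.Icc 1 n, w k ∈ Finset.Icc 1 n) ∧
  (∀ k ∈ Finset.Icc 1 n, ∀ l ∈ Finset.Icc 1 n, w k = w l → k = l) ∧
  (∀ k, k ∉ Finset.Icc 1 n → w k = k)

/-- The Coxeter length of `w ∈ S_n`: the number of inversions. -/
def lenInv (n : ℕ) (w : ℕ → ℕ) : ℕ :=
  ((Finset.Icc 1 n ×ˢ Finset.Icc 1 n).filter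
    (fun q => q.1 < q.2 ∧ w q.2 < w q.1)).card

/-- One step of the Bruhat order on `S_n`: `y = (i j) ∘ x` (so `y x⁻¹` is a
reflection) with `l(x) < l(y)`. -/
def BruhatStep (n : ℕ) (x y : ℕ → ℕ) : Prop :=
  lenInv n x < lenInv n y ∧
  ∃ i j, 1 ≤ i ∧ i < j ∧ j ≤ n ∧ ∀ k, y k = Equiv.swap i j (x k)

/-- The Bruhat order on `S_n`. -/
def BruhatLe (n : ℕ) (x y : ℕ → ℕ) : Prop :=
  Relation.ReflTransGen (BruhatStep n) x y

/-- One step of the left weak order on `S_n`: `y = s_i ∘ x` with `l(x) < l(y)`. -/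
def WeakStep (n : ℕ) (x y : ℕ → ℕ) : Prop :=
  lenInv n x < lenInv n y ∧
  ∃ i, 1 ≤ i ∧ i + 1 ≤ n ∧ ∀ k, y k = Equiv.swap i (i+1) (x k)

/-- The left weak order on `S_n`. -/
def WeakLe (n : ℕ) (x y : ℕ → ℕ) : Prop :=
  Relation.ReflTransGen (WeakStep n) x y

/-- `ptau` is (the position function of) the column superstandard tableau
`τ_lam`: column standard, with the columns filled in order from left to right. -/
def IsSuperstandard (lam : ℕ → ℕ) (n : ℕ) (ptau : ℕ → ℕ × ℕ) : Prop :=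
  IsTab lam n ptau ∧ ColStd 0 n ptau ∧
  ∀ k, 1 ≤ k → k + 1 ≤ n → colT ptau k ≤ colT ptau (k+1)

/-- `w = perm(t)`, i.e. `w · τ_lam = t`: for each `k`, the box of `τ_lam`
containing `k` contains `w k` in `t`. -/
def IsPermTab (n : ℕ) (ptau pt : ℕ → ℕ × ℕ) (w : ℕ → ℕ) : Prop :=
  IsPermOf n w ∧ ∀ k ∈ Finset.Icc 1 n, pt (w k) = ptau k

/-- `p` (a standard skew tableau of shape `lam/mu` with entries `a+1, …, a+n`)
is the `(a+1)`-critical tableau: writing `m = a+1`, the entry `m` lies in the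
first nonempty column `i` of the skew diagram, `m+1` lies in column `i+1`,
and the restriction to entries `> m+1` is minimal (no strong descents). -/
def IsCritical (lam mu : ℕ → ℕ) (a n : ℕ) (p : ℕ → ℕ × ℕ) : Prop :=
  IsStdSkew lam mu a n p ∧
  (∀ j, 1 ≤ j → j < colT p (a+1) → lam j ≤ mu j) ∧
  mu (colT p (a+1)) < lam (colT p (a+1)) ∧
  colT p (a+2) = colT p (a+1) + 1 ∧
  ∀ i, a + 3 ≤ i → i + 1 ≤ a + n → colT p i ≤ colT p (i+1)

/-- The box `c` is removable from the diagram of `lam`. -/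
def Removable (lam : ℕ → ℕ) (c : ℕ × ℕ) : Prop :=
  1 ≤ c.2 ∧ c.1 = lam c.2 ∧ lam (c.2 + 1) < c.1

/-- One step of a jeu de taquin slide on a filling `p` with entries `1, …, n`:
the hole moves from `b` to `b'`, where `b'` is the box (below or to the right
of `b`) containing the smaller entry `x` among the occupied candidates, and the
filling is updated by moving `x` into `b`. -/
def SlideStep (n : ℕ) (p : ℕ → ℕ × ℕ) (b : ℕ × ℕ)
    (p' : ℕ → ℕ × ℕ) (b' : ℕ × ℕ) : Prop :=
  ∃ x, 1 ≤ x ∧ x ≤ n ∧ p x = b' ∧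
    (b' = (b.1 + 1, b.2) ∨ b' = (b.1, b.2 + 1)) ∧
    (∀ y, 1 ≤ y → y ≤ n → (p y = (b.1 + 1, b.2) ∨ p y = (b.1, b.2 + 1)) → x ≤ y) ∧
    (∀ y, p' y = if y = x then b else p y)

/-- `lam/mu` is a skew partition of `n`. -/
def IsSkewShape (n : ℕ) (lam mu : ℕ → ℕ) : Prop :=
  (∃ m, IsPartition (m + n) lam ∧ IsPartition m mu) ∧ ∀ j, mu j ≤ lam j

/-- characterisation of the `m`-critical tableau (here entries
are `m, …, m+n-1` with `m = a+1`): given `col_t(m+1) = col_t(m) + 1`, the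
tableau is `m`-critical iff (1) `col_t(m) = col_t(m+2)` or `m+1 ∉ SD(t)`, and
(2) every descent `j > m+1` is a weak descent. -/
theorem critical_iff (n a : ℕ) (lam mu : ℕ → ℕ)
    (hskew : IsSkewShape n lam mu)
    (i : ℕ) (hi1 : 1 ≤ i) (himin : ∀ j, 1 ≤ j → j < i → lam j ≤ mu j)
    (hii : mu i < lam i) (hii1 : mu (i+1) < lam (i+1))
    (pt : ℕ → ℕ × ℕ) (ht : IsStdSkew lam mu a n pt)
    (hcol : colT pt (a+2) = colT pt (a+1) + 1) :
    IsCritical lam mu a n pt ↔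
      ((colT pt (a+1) = colT pt (a+3) ∨ ¬ inSD a n pt (a+2)) ∧
        ∀ jj, a + 2 < jj → inD a n pt jj → inWD a n pt jj) := by

  obtain ⟨⟨hbox, hinj, hsurj⟩, hcs, hrs⟩ := id ht
  -- n ≥ 1
  have hn1 : 1 ≤ n := by
    by_contra hn
    have hn0 : n = 0 := by omega
    subst hn0
    obtain ⟨⟨m, ⟨⟨_, N, hN, hNs⟩, _⟩, ⟨_, N', hN', hN's⟩, _⟩, hle⟩ := hskew
    have hiN : i ≤ N := le_of_not_gt fun h => by have := hN i h; omega
    have h1 : psum lam (max N N') = m + 0 := by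
      rw [← hNs]
      unfold psum
      exact (Finset.sum_subset (Finset.Icc_subset_Icc_right (le_max_left N N'))
        (fun x hx hx' => hN x (by simp only [Finset.mem_Icc] at hx hx'; omega))).symm
    have h2 : psum mu (max N N') = m := by
      rw [← hN's]
      unfold psum
      exact (Finset.sum_subset (Finset.Icc_subset_Icc_right (le_max_right N N'))
        (fun x hx hx' => hN' x (by simp only [Finset.mem_Icc] at hx hx'; omega))).symm
    have h3 : psum mu (max N N') < psum lam (max N N') := by
      unfold psum
      exact Finset.sum_lt_sum (fun j _ => hle j)
        ⟨i, Finset.mem_Icc.mpr ⟨hi1, le_trans hiN (le_max_left _ _)⟩, hii⟩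
    omega
  have ha1mem : a + 1 ∈ Finset.Icc (a+1) (a+n) := by
    simp only [Finset.mem_Icc]; omega
  have hc : mu (colT pt (a+1)) < lam (colT pt (a+1)) := by
    have hb := hbox (a+1) ha1mem
    unfold colT
    omega
  constructor
  · rintro ⟨_, h2, h3, h4, h5⟩
    refine ⟨?_, ?_⟩
    · by_cases hsd : inSD a n pt (a+2)
      · left
        obtain ⟨_, h3n, hlt⟩ := hsd
        have e : a + 2 + 1 = a + 3 := by omega
        rw [e] at h3n hlt
        have hmem : a + 3 ∈ Finset.Icc (a+1) (a+n) := by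
          simp only [Finset.mem_Icc]; omega
        have hb := hbox (a+3) hmem
        have hge : colT pt (a+1) ≤ colT pt (a+3) := by
          by_contra hlt2
          have h1c : 1 ≤ colT pt (a+3) := hb.1
          have := h2 (colT pt (a+3)) h1c (by omega)
          have hb2 : mu (colT pt (a+3)) < (pt (a+3)).1 := hb.2.1
          have hb3 : (pt (a+3)).1 ≤ lam (colT pt (a+3)) := hb.2.2
          omega
        omega
      · right; exact hsd
    · intro jj hjj hd
      obtain ⟨_, hle, hd3⟩ := hd
      have := h5 jj (by omega) hle
      exact ⟨by omega, hle, le_antisymm hd3 this⟩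
  · rintro ⟨h1or, h2all⟩
    have hmono : ∀ k, a + 3 ≤ k → k + 1 ≤ a + n → colT pt k ≤ colT pt (k+1) := by
      intro k hk hk1
      rcases le_or_gt (colT pt (k+1)) (colT pt k) with h | h
      · obtain ⟨-, -, hw⟩ := h2all k (by omega) ⟨by omega, hk1, h⟩
        exact le_of_eq hw.symm
      · exact le_of_lt h
    have hbase : a + 3 ≤ a + n → colT pt (a+1) ≤ colT pt (a+3) := by
      intro h3n
      rcases h1or with heq | hsd
      · exact le_of_eq heq
      · have hnlt : ¬ colT pt (a+2+1) < colT pt (a+2) :=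
          fun hlt => hsd ⟨by omega, by omega, hlt⟩
        have e : a + 2 + 1 = a + 3 := by omega
        rw [e] at hnlt
        omega
    have hkey : ∀ k, k ∈ Finset.Icc (a+1) (a+n) → colT pt (a+1) ≤ colT pt k := by
      intro k hk
      simp only [Finset.mem_Icc] at hk
      rcases Nat.lt_or_ge k (a+3) with hsmall | hbig
      · rcases Nat.lt_or_ge k (a+2) with h' | h'
        · have : k = a + 1 := by omega
          rw [this]
        · have : k = a + 2 := by omega
          rw [this]; omega
      · clear ha1mem hc
        induction k with
        | zero => omega
        | succ k ih =>
          rcases Nat.lt_or_ge (a+3) (k+1) with h | h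
          · exact le_trans (ih ⟨by omega, by omega⟩ (by omega)) (hmono k (by omega) hk.2)
          · have : k + 1 = a + 3 := by omega
            rw [this]
            exact hbase (by omega)
    refine ⟨ht, ?_, hc, hcol, ?_⟩
    · intro j hj1 hjc
      by_contra hlam
      push_neg at hlam
      obtain ⟨k, hkmem, hpk⟩ := hsurj (mu j + 1, j) hj1
        (show mu j < mu j + 1 by omega) (show mu j + 1 ≤ lam j by omega)
      have hck : colT pt k = j := by unfold colT; rw [hpk]
      have := hkey k hkmem
      omega
    · intro i' h3' h1'
      exact hmono i' h3' h1'
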